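/- arXiv:1305.2396 — 3 statements merged into one kernel-verified Lean document; each statement's English description precedes it below -/
import Mathlib

section
/- (Perron–Frobenius, positive case) Let B be a d×d matrix with all entries strictly positive. Then there exist λ > 0 and vectors r, l ∈ ℝ^d with all entries strictly positive such that Br = λr and lᵀB = λlᵀ; moreover the left and right eigenvalues obtained this way coincide. -/
open Finset Matrix

/-- Positive matrix times nonnegative nonzero vector is positive. -/
lemma PF.mulVec_pos {d : ℕ} (B : Matrix (Fin d) (Fin d) ℝ) (hB : ∀ i j, 0 < B i j)
    (x : Fin d → ℝ) (hx : ∀ j, 0 ≤ x j) (hx' : ∃ j, 0 < x j) (i : Fin d) :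
    0 < B.mulVec x i := by
  obtain ⟨j₀, hj₀⟩ := hx'
  rw [Matrix.mulVec, dotProduct]
  exact Finset.sum_pos' (fun j _ => mul_nonneg (hB i j).le (hx j))
    ⟨j₀, Finset.mem_univ _, mul_pos (hB i j₀) hj₀⟩

/-- Collatz–Wielandt upper bound. -/
lemma PF.t_bound {d : ℕ} (B : Matrix (Fin d) (Fin d) ℝ) (hB : ∀ i j, 0 < B i j)
    (x : Fin d → ℝ) (hx : ∀ j, 0 ≤ x j) (hsum : ∑ j, x j = 1)
    (t : ℝ) (ht : ∀ i, t * x i ≤ B.mulVec x i) :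
    t ≤ ∑ i, ∑ j, B i j := by
  have hx1 : ∀ j, x j ≤ 1 := by
    intro j
    calc x j ≤ ∑ j, x j := Finset.single_le_sum (fun k _ => hx k) (Finset.mem_univ j)
    _ = 1 := hsum
  calc t = ∑ i, t * x i := by rw [← Finset.mul_sum, hsum, mul_one]
    _ ≤ ∑ i, B.mulVec x i := Finset.sum_le_sum fun i _ => ht i
    _ = ∑ j, (∑ i, B i j) * x j := by
        simp only [Matrix.mulVec, dotProduct, Finset.sum_mul]
        rw [Finset.sum_comm]
    _ ≤ ∑ j, (∑ i, B i j) * 1 := by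
        refine Finset.sum_le_sum fun j _ => ?_
        exact mul_le_mul_of_nonneg_left (hx1 j)
          (Finset.sum_nonneg fun i _ => (hB i j).le)
    _ = ∑ i, ∑ j, B i j := by simp only [mul_one]; exact Finset.sum_comm
    
/-- Existence of a positive right eigenvector with positive eigenvalue. -/
lemma PF.right {d : ℕ} (hd : 0 < d) (B : Matrix (Fin d) (Fin d) ℝ)
    (hB : ∀ i j, 0 < B i j) :
    ∃ lam : ℝ, 0 < lam ∧ ∃ r : Fin d → ℝ, (∀ i, 0 < r i) ∧ B.mulVec r = lam • r := by
  have hne : Nonempty (Fin d) := ⟨⟨0, hd⟩⟩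
  set M : ℝ := (∑ i, ∑ j, B i j) + 1 with hMdef
  set S : Set ((Fin d → ℝ) × ℝ) :=
    {p | (∀ i, 0 ≤ p.1 i) ∧ (∑ i, p.1 i = 1) ∧ 0 ≤ p.2 ∧ p.2 ≤ M ∧
      ∀ i, p.2 * p.1 i ≤ B.mulVec p.1 i} with hSdef
  have hmulVec_cont : ∀ i, Continuous fun p : (Fin d → ℝ) × ℝ => B.mulVec p.1 i := by
    intro i
    simp only [Matrix.mulVec, dotProduct]
    exact continuous_finset_sum _ fun j _ =>
      continuous_const.mul ((continuous_apply j).comp continuous_fst)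
  have hSclosed : IsClosed S := by
    have h1 : IsClosed {p : (Fin d → ℝ) × ℝ | ∀ i, 0 ≤ p.1 i} := by
      rw [Set.setOf_forall]
      exact isClosed_iInter fun i =>
        isClosed_le continuous_const ((continuous_apply i).comp continuous_fst)
    have h2 : IsClosed {p : (Fin d → ℝ) × ℝ | ∑ i, p.1 i = 1} :=
      isClosed_eq (continuous_finset_sum _ fun j _ =>
        (continuous_apply j).comp continuous_fst) continuous_const
    have h3 : IsClosed {p : (Fin d → ℝ) × ℝ | 0 ≤ p.2} :=
      isClosed_le continuous_const continuous_snd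
    have h4 : IsClosed {p : (Fin d → ℝ) × ℝ | p.2 ≤ M} :=
      isClosed_le continuous_snd continuous_const
    have h5 : IsClosed {p : (Fin d → ℝ) × ℝ | ∀ i, p.2 * p.1 i ≤ B.mulVec p.1 i} := by
      rw [Set.setOf_forall]
      exact isClosed_iInter fun i =>
        isClosed_le (continuous_snd.mul ((continuous_apply i).comp continuous_fst))
          (hmulVec_cont i)
    exact h1.inter (h2.inter (h3.inter (h4.inter h5)))
  have hSsub : S ⊆ Set.Icc (0 : Fin d → ℝ) 1 ×ˢ Set.Icc (0 : ℝ) M := by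
    rintro ⟨x, t⟩ ⟨hx, hsum, ht0, htM, _⟩
    refine ⟨⟨?_, ?_⟩, ht0, htM⟩
    · intro j; exact hx j
    · intro j
      calc x j ≤ ∑ j, x j := Finset.single_le_sum (fun k _ => hx k) (Finset.mem_univ j)
      _ = 1 := hsum
  have hScompact : IsCompact S :=
    (isCompact_Icc.prod isCompact_Icc).of_isClosed_subset hSclosed hSsub
  -- the point (uniform vector, min row sum) lies in S
  set t₀ : ℝ := Finset.univ.inf' (Finset.univ_nonempty) (fun i => ∑ j, B i j) with ht₀def
  have ht₀pos : 0 < t₀ := by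
    rw [ht₀def, Finset.lt_inf'_iff]
    exact fun i _ => Finset.sum_pos (fun j _ => hB i j) Finset.univ_nonempty
  have hdR : (0:ℝ) < (d:ℝ) := by exact_mod_cast hd
  have hp₀ : ((fun _ => (d:ℝ)⁻¹, t₀) : (Fin d → ℝ) × ℝ) ∈ S := by
    refine ⟨fun i => by positivity, ?_, ht₀pos.le, ?_, ?_⟩
    · simp [Finset.sum_const, Finset.card_fin, nsmul_eq_mul]
      field_simp
    · have : t₀ ≤ ∑ j, B ⟨0, hd⟩ j := Finset.inf'_le _ (Finset.mem_univ _)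
      refine this.trans (le_trans ?_ (le_add_of_nonneg_right zero_le_one))
      exact Finset.single_le_sum
        (fun i _ => Finset.sum_nonneg fun j _ => (hB i j).le) (Finset.mem_univ _)
    · intro i
      have h1 : t₀ ≤ ∑ j, B i j := Finset.inf'_le _ (Finset.mem_univ _)
      have : B.mulVec (fun _ => (d:ℝ)⁻¹) i = (∑ j, B i j) * (d:ℝ)⁻¹ := by
        simp [Matrix.mulVec, dotProduct, Finset.sum_mul]
      rw [this]
      exact mul_le_mul_of_nonneg_right h1 (by positivity)
  obtain ⟨p, hpS, hpmax⟩ :=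
    hScompact.exists_isMaxOn ⟨_, hp₀⟩ continuous_snd.continuousOn
  obtain ⟨hr_nn, hr_sum, hlam0, hlamM, hineq⟩ := hpS
  set lam := p.2 with hlamdef
  set r₀ := p.1 with hr₀def
  have hlam_pos : 0 < lam := lt_of_lt_of_le ht₀pos (hpmax hp₀)
  have hr_ex : ∃ j, 0 < r₀ j := by
    by_contra h
    push_neg at h
    have : ∀ j, r₀ j = 0 := fun j => le_antisymm (h j) (hr_nn j)
    simp [this] at hr_sum
  -- r₀ is an eigenvector
  have heq : B.mulVec r₀ = lam • r₀ := by
    by_contra hne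
    have hstrict : ∃ i, lam * r₀ i < B.mulVec r₀ i := by
      by_contra h
      push_neg at h
      exact hne (funext fun i => le_antisymm (h i) (hineq i))
    obtain ⟨i₀, hi₀⟩ := hstrict
    set y : Fin d → ℝ := fun i => B.mulVec r₀ i - lam * r₀ i with hydef
    have hy_nn : ∀ i, 0 ≤ y i := fun i => sub_nonneg.mpr (hineq i)
    have hy_ex : ∃ i, 0 < y i := ⟨i₀, sub_pos.mpr hi₀⟩
    set z : Fin d → ℝ := B.mulVec r₀ with hzdef
    have hz_pos : ∀ i, 0 < z i := PF.mulVec_pos B hB r₀ hr_nn hr_ex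
    have hBy_pos : ∀ i, 0 < B.mulVec y i := PF.mulVec_pos B hB y hy_nn hy_ex
    have hy_eq : y = z - lam • r₀ := by funext i; simp [hydef, hzdef]
    have hBz_gt : ∀ i, lam * z i < B.mulVec z i := by
      intro i
      have : B.mulVec y = B.mulVec z - lam • z := by
        rw [hy_eq, Matrix.mulVec_sub, Matrix.mulVec_smul]
      have h2 := hBy_pos i
      rw [this] at h2
      simp only [Pi.sub_apply, Pi.smul_apply, smul_eq_mul] at h2
      linarith
    set t' : ℝ := Finset.univ.inf' Finset.univ_nonempty (fun i => B.mulVec z i / z i)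
      with ht'def
    have ht'_gt : lam < t' := by
      rw [ht'def, Finset.lt_inf'_iff]
      intro i _
      rw [lt_div_iff₀ (hz_pos i)]
      exact hBz_gt i
    have ht'_le : ∀ i, t' * z i ≤ B.mulVec z i := by
      intro i
      have : t' ≤ B.mulVec z i / z i := Finset.inf'_le _ (Finset.mem_univ _)
      rwa [le_div_iff₀ (hz_pos i)] at this
    set c : ℝ := ∑ i, z i with hcdef
    have hc_pos : 0 < c := Finset.sum_pos (fun i _ => hz_pos i) Finset.univ_nonempty
    set z' : Fin d → ℝ := c⁻¹ • z with hz'def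
    have hz'_nn : ∀ i, 0 ≤ z' i := fun i => by
      simp only [hz'def, Pi.smul_apply, smul_eq_mul]
      exact mul_nonneg (inv_nonneg.mpr hc_pos.le) (hz_pos i).le
    have hz'_sum : ∑ i, z' i = 1 := by
      simp only [hz'def, Pi.smul_apply, smul_eq_mul, ← Finset.mul_sum, ← hcdef]
      field_simp
    have hz'_ineq : ∀ i, t' * z' i ≤ B.mulVec z' i := by
      intro i
      have : B.mulVec z' = c⁻¹ • B.mulVec z := by
        rw [hz'def, Matrix.mulVec_smul]
      rw [this]
      simp only [hz'def, Pi.smul_apply, smul_eq_mul]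
      rw [mul_left_comm]
      exact mul_le_mul_of_nonneg_left (ht'_le i) (by positivity)
    have ht'M : t' ≤ M :=
      (PF.t_bound B hB z' hz'_nn hz'_sum t' hz'_ineq).trans
        (le_add_of_nonneg_right zero_le_one)
    have hmem : ((z', t') : (Fin d → ℝ) × ℝ) ∈ S :=
      ⟨hz'_nn, hz'_sum, (hlam_pos.trans ht'_gt).le, ht'M, hz'_ineq⟩
    exact absurd (hpmax hmem) (not_le.mpr ht'_gt)
  have hr_pos : ∀ i, 0 < r₀ i := by
    intro i
    have h1 : 0 < B.mulVec r₀ i := PF.mulVec_pos B hB r₀ hr_nn hr_ex i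
    rw [heq] at h1
    simp only [Pi.smul_apply, smul_eq_mul] at h1
    nlinarith
  exact ⟨lam, hlam_pos, r₀, hr_pos, heq⟩

/-- Perron–Frobenius theorem for matrices with strictly positive entries: there exist
`λ > 0` and strictly positive right and left eigenvectors `r`, `l` for the same
eigenvalue `λ`. -/
theorem perron_frobenius_positive {d : ℕ} (B : Matrix (Fin d) (Fin d) ℝ)
    (hB : ∀ i j, 0 < B i j) :
    ∃ lam : ℝ, 0 < lam ∧ ∃ r l : Fin d → ℝ,
      (∀ i, 0 < r i) ∧ (∀ i, 0 < l i) ∧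
      B.mulVec r = lam • r ∧ B.vecMul l = lam • l := by
  rcases Nat.eq_zero_or_pos d with hd | hd
  · subst hd
    refine ⟨1, one_pos, 0, 0, fun i => i.elim0, fun i => i.elim0, ?_, ?_⟩ <;>
      · funext i; exact i.elim0
  · obtain ⟨lam, hlam, r, hr, hreq⟩ := PF.right hd B hB
    obtain ⟨mu, hmu, l, hl, hleq⟩ := PF.right hd B.transpose (fun i j => hB j i)
    have hvecMul : B.vecMul l = mu • l := by
      rw [← Matrix.mulVec_transpose]; exact hleq
    have : Nonempty (Fin d) := ⟨⟨0, hd⟩⟩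
    have hlr_pos : 0 < l ⬝ᵥ r :=
      Finset.sum_pos (fun i _ => mul_pos (hl i) (hr i)) Finset.univ_nonempty
    have key : mu * (l ⬝ᵥ r) = lam * (l ⬝ᵥ r) := by
      have h1 : l ⬝ᵥ B.mulVec r = lam * (l ⬝ᵥ r) := by
        rw [hreq, dotProduct_smul, smul_eq_mul]
      have h2 : l ⬝ᵥ B.mulVec r = mu * (l ⬝ᵥ r) := by
        rw [Matrix.dotProduct_mulVec, hvecMul, smul_dotProduct, smul_eq_mul]
      rw [← h1, ← h2]
    have hmueq : mu = lam := by
      have := mul_right_cancel₀ (ne_of_gt hlr_pos) key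
      exact this
    exact ⟨lam, hlam, r, l, hr, hl, hreq, by rw [← hmueq]; exact hvecMul⟩
end

section
/- For every finite Markov measure: if P is a d×d row-stochastic matrix with positive entries, π is its stationary probability vector, A(i,j) is a real function of two indices, M_{ij} = e^{A(i,j)} has Perron eigenvalue λ_A, and h(μ) = −Σ_{i,j} πᵢ P(i,j) log P(i,j) denotes the entropy of the corresponding Markov measure, then h(μ) + Σ_{i,j} πᵢ P(i,j) A(i,j) ≤ log λ_A, with equality when P = P_A, the stochasticization of M. -/
/-- Free energy of a Markov measure is at most `log λ_A`: for any row-stochastic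
positive matrix `P` with stationary probability vector `π`,
` −Σ πᵢP(i,j) log P(i,j) + Σ πᵢP(i,j)A(i,j) ≤ log λ_A`,
where `λ_A` is the Perron eigenvalue of `M_{ij} = e^{A(i,j)}` (with positive right
eigenvector `r`); equality holds when `P` is the stochasticization
`P_A(i,j) = e^{A(i,j)} rⱼ/(λ_A rᵢ)` of `M`. -/
theorem markov_free_energy_le_log_perron {d : ℕ} (A : Fin d → Fin d → ℝ)
    (P : Fin d → Fin d → ℝ) (hPpos : ∀ i j, 0 < P i j)
    (hProw : ∀ i, ∑ j, P i j = 1)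
    (π : Fin d → ℝ) (hπpos : ∀ i, 0 < π i) (hπsum : ∑ i, π i = 1)
    (hstat : ∀ j, ∑ i, π i * P i j = π j)
    (lam : ℝ) (hlam : 0 < lam) (r : Fin d → ℝ) (hr : ∀ i, 0 < r i)
    (heig : ∀ i, ∑ j, Real.exp (A i j) * r j = lam * r i) :
    (-∑ i, ∑ j, π i * P i j * Real.log (P i j)) +
        ∑ i, ∑ j, π i * P i j * A i j ≤ Real.log lam ∧
      ((P = fun i j => Real.exp (A i j) * r j / (lam * r i)) →
        (-∑ i, ∑ j, π i * P i j * Real.log (P i j)) +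
            ∑ i, ∑ j, π i * P i j * A i j = Real.log lam) := by
  set Q : Fin d → Fin d → ℝ := fun i j => Real.exp (A i j) * r j / (lam * r i) with hQdef
  have hQpos : ∀ i j, 0 < Q i j := by
    intro i j
    exact div_pos (mul_pos (Real.exp_pos _) (hr j)) (mul_pos hlam (hr i))
  have hQrow : ∀ i, ∑ j, Q i j = 1 := by
    intro i
    have h : ∑ j, Q i j = (∑ j, Real.exp (A i j) * r j) / (lam * r i) := by
      simp only [hQdef]; rw [Finset.sum_div]
    rw [h, heig i, div_self (mul_pos hlam (hr i)).ne']
  have hlogQ : ∀ i j, Real.log (Q i j)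
      = A i j + Real.log (r j) - (Real.log lam + Real.log (r i)) := by
    intro i j
    simp only [hQdef]
    rw [Real.log_div (mul_pos (Real.exp_pos _) (hr j)).ne' (mul_pos hlam (hr i)).ne',
      Real.log_mul (Real.exp_ne_zero _) (hr j).ne',
      Real.log_mul hlam.ne' (hr i).ne', Real.log_exp]
  -- aggregate sums
  have h1 : ∑ i, ∑ j, π i * P i j * Real.log (r j) = ∑ j, π j * Real.log (r j) := by
    rw [Finset.sum_comm]
    refine Finset.sum_congr rfl fun j _ => ?_
    rw [← Finset.sum_mul, hstat j]
  have h2 : ∀ c : Fin d → ℝ, ∑ i, ∑ j, π i * P i j * c i = ∑ i, π i * c i := by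
    intro c
    refine Finset.sum_congr rfl fun i _ => ?_
    have : ∑ j, π i * P i j * c i = (π i * c i) * ∑ j, P i j := by
      rw [Finset.mul_sum]; exact Finset.sum_congr rfl fun j _ => by ring
    rw [this, hProw i, mul_one]
  have h3 : ∑ i, ∑ j, π i * P i j * Real.log lam = Real.log lam := by
    have := h2 (fun _ => Real.log lam)
    rw [this, ← Finset.sum_mul, hπsum, one_mul]
  set S : ℝ := ∑ i, ∑ j, π i * P i j * (Real.log (Q i j) - Real.log (P i j)) with hSdef
  have hS : S = ((-∑ i, ∑ j, π i * P i j * Real.log (P i j)) +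
      ∑ i, ∑ j, π i * P i j * A i j) - Real.log lam := by
    have expand : S = (∑ i, ∑ j, π i * P i j * A i j)
        + (∑ i, ∑ j, π i * P i j * Real.log (r j))
        - (∑ i, ∑ j, π i * P i j * Real.log lam)
        - (∑ i, ∑ j, π i * P i j * Real.log (r i))
        - (∑ i, ∑ j, π i * P i j * Real.log (P i j)) := by
      rw [hSdef]
      have e1 : (∑ i, ∑ j, π i * P i j * (Real.log (Q i j) - Real.log (P i j)))
          = ∑ i, ∑ j, (π i * P i j * A i j + π i * P i j * Real.log (r j)
            - π i * P i j * Real.log lam - π i * P i j * Real.log (r i)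
            - π i * P i j * Real.log (P i j)) := by
        refine Finset.sum_congr rfl fun i _ => Finset.sum_congr rfl fun j _ => ?_
        rw [hlogQ i j]; ring
      rw [e1]
      simp only [Finset.sum_sub_distrib, Finset.sum_add_distrib]
    rw [expand, h1, h3, h2 (fun i => Real.log (r i))]
    ring
  have hSle : S ≤ 0 := by
    rw [hSdef]
    have : ∀ i ∈ Finset.univ, ∑ j, π i * P i j * (Real.log (Q i j) - Real.log (P i j)) ≤ 0 := by
      intro i _
      have inner : ∑ j, P i j * (Real.log (Q i j) - Real.log (P i j)) ≤ 0 := by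
        have step : ∀ j ∈ Finset.univ,
            P i j * (Real.log (Q i j) - Real.log (P i j)) ≤ Q i j - P i j := by
          intro j _
          have hq := hQpos i j; have hp := hPpos i j
          have hd : 0 < Q i j / P i j := div_pos hq hp
          have hlog : Real.log (Q i j) - Real.log (P i j) ≤ Q i j / P i j - 1 := by
            rw [← Real.log_div hq.ne' hp.ne']
            exact Real.log_le_sub_one_of_pos hd
          calc P i j * (Real.log (Q i j) - Real.log (P i j))
              ≤ P i j * (Q i j / P i j - 1) := by
                exact mul_le_mul_of_nonneg_left hlog hp.le
            _ = Q i j - P i j := by field_simp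
        calc ∑ j, P i j * (Real.log (Q i j) - Real.log (P i j))
            ≤ ∑ j, (Q i j - P i j) := Finset.sum_le_sum step
          _ = 0 := by rw [Finset.sum_sub_distrib, hQrow i, hProw i, sub_self]
      have : ∑ j, π i * P i j * (Real.log (Q i j) - Real.log (P i j))
          = π i * ∑ j, P i j * (Real.log (Q i j) - Real.log (P i j)) := by
        rw [Finset.mul_sum]; exact Finset.sum_congr rfl fun j _ => by ring
      rw [this]
      exact mul_nonpos_of_nonneg_of_nonpos (hπpos i).le inner
    calc (∑ i, ∑ j, π i * P i j * (Real.log (Q i j) - Real.log (P i j)))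
        ≤ ∑ i : Fin d, (0:ℝ) := Finset.sum_le_sum this
      _ = 0 := by simp
  constructor
  · linarith
  · intro hPQ
    have hPQ' : P = Q := hPQ
    have hS0 : S = 0 := by
      rw [hSdef, hPQ']
      simp
    linarith
end

section
/- Every d×d matrix A with all entries real (no −∞ entries) has a max-plus eigenvalue: there exist λ ∈ ℝ and v ∈ ℝ^d such that max_j (A_{ij} + v_j) = λ + v_i for every i = 1,…,d. Moreover this eigenvalue λ is unique: if max_j(A_{ij}+v_j) = λ+v_i and max_j(A_{ij}+u_j) = μ+u_i for some real vectors u, v, then λ = μ. -/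
namespace MaxPlusAux

variable {d : ℕ}

/-- weight of the walk `p 0 → p 1 → ⋯ → p k` w.r.t. matrix `A`. -/
def wt (A : Fin (d+1) → Fin (d+1) → ℝ) (k : ℕ) (p : ℕ → Fin (d+1)) : ℝ :=
  ∑ t ∈ Finset.range k, A (p t) (p (t+1))

lemma wt_congr (A : Fin (d+1) → Fin (d+1) → ℝ) {k : ℕ} {p q : ℕ → Fin (d+1)}
    (h : ∀ t ≤ k, p t = q t) : wt A k p = wt A k q := by
  unfold wt
  refine Finset.sum_congr rfl fun t ht => ?_
  rw [Finset.mem_range] at ht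
  rw [h t (by omega), h (t+1) (by omega)]

lemma wt_add (A : Fin (d+1) → Fin (d+1) → ℝ) (a b : ℕ) (p : ℕ → Fin (d+1)) :
    wt A (a + b) p = wt A a p + wt A b (fun t => p (a + t)) := by
  unfold wt
  rw [Finset.sum_range_add]
  congr 1

lemma wt_sub_const (A : Fin (d+1) → Fin (d+1) → ℝ) (c : ℝ) (k : ℕ) (p : ℕ → Fin (d+1)) :
    wt (fun i j => A i j - c) k p = wt A k p - k * c := by
  unfold wt
  rw [Finset.sum_sub_distrib, Finset.sum_const, Finset.card_range, nsmul_eq_mul]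


variable (A : Fin (d+1) → Fin (d+1) → ℝ)

/-- set of cycle means over closed walks of length `1 ≤ k ≤ d+1`. -/
def cycSet : Set ℝ :=
  { x | ∃ k, 1 ≤ k ∧ k ≤ d + 1 ∧ ∃ p : ℕ → Fin (d+1), p k = p 0 ∧ x = wt A k p / k }

lemma cycSet_nonempty : (cycSet A).Nonempty := by
  refine ⟨wt A 1 (fun _ => 0) / 1, 1, le_refl _, by omega, fun _ => 0, rfl, by norm_num⟩

lemma cycSet_finite : (cycSet A).Finite := by
  have h : cycSet A ⊆ Set.range (fun kq : Fin (d+2) × (Fin (d+2) → Fin (d+1)) =>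
      wt A kq.1 (fun t => kq.2 ⟨min t (d+1), Nat.lt_succ_of_le (min_le_right _ _)⟩) / kq.1) := by
    rintro x ⟨k, hk1, hkn, p, hp, rfl⟩
    refine ⟨⟨⟨k, by omega⟩, fun s => p s⟩, ?_⟩
    simp only
    have : wt A k (fun t => p (min t (d+1))) = wt A k p := by
      refine wt_congr A fun t ht => ?_
      rw [min_eq_left (by omega)]
    rw [this]
  exact (Set.finite_range _).subset h

noncomputable def lam : ℝ := sSup (cycSet A)

lemma wt_le_lam {k : ℕ} {p : ℕ → Fin (d+1)} (hk1 : 1 ≤ k) (hkn : k ≤ d + 1)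
    (hp : p k = p 0) : wt A k p ≤ k * lam A := by
  have hmem : wt A k p / k ∈ cycSet A := ⟨k, hk1, hkn, p, hp, rfl⟩
  have := le_csSup (cycSet_finite A).bddAbove hmem
  have hk : (0:ℝ) < k := by exact_mod_cast hk1
  rw [div_le_iff₀ hk] at this
  simpa [lam, mul_comm] using this

lemma lam_attained : ∃ k, 1 ≤ k ∧ k ≤ d + 1 ∧ ∃ p : ℕ → Fin (d+1),
    p k = p 0 ∧ wt A k p = k * lam A := by
  obtain ⟨k, hk1, hkn, p, hp, hx⟩ := (cycSet_nonempty A).csSup_mem (cycSet_finite A)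
  refine ⟨k, hk1, hkn, p, hp, ?_⟩
  have hk : (0:ℝ) < k := by exact_mod_cast hk1
  field_simp [lam] at hx ⊢
  unfold lam
  linarith [hx]

/-- removing the closed subwalk between repeated vertices `p a = p b`. -/
lemma wt_split {a b k : ℕ} (p : ℕ → Fin (d+1)) (hab : a < b) (hbk : b ≤ k) (hpab : p a = p b) :
    wt A k p = wt A (k - (b - a)) (fun t => if t < a then p t else p (t + (b - a)))
      + wt A (b - a) (fun t => p (a + t)) := by
  set ℓ := b - a with hℓ
  set p' : ℕ → Fin (d+1) := fun t => if t < a then p t else p (t + ℓ) with hp'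
  have h1 : k = a + ℓ + (k - b) := by omega
  have h2 : k - ℓ = a + (k - b) := by omega
  calc wt A k p = wt A (a + ℓ + (k - b)) p := by rw [← h1]
    _ = wt A a p + wt A ℓ (fun t => p (a + t)) + wt A (k - b) (fun t => p (a + ℓ + t)) := by
        rw [wt_add, wt_add]
    _ = wt A (k - ℓ) p' + wt A ℓ (fun t => p (a + t)) := by
        rw [h2, wt_add]
        have e1 : wt A a p' = wt A a p := by
          refine wt_congr A fun t ht => ?_
          rcases lt_or_eq_of_le ht with h | h
          · simp [hp', h]
          · rw [h]
            simp only [hp']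
            rw [if_neg (lt_irrefl a)]
            have hb : a + ℓ = b := by omega
            rw [hb, ← hpab]
        have e2 : wt A (k - b) (fun t => p' (a + t)) = wt A (k - b) (fun t => p (a + ℓ + t)) := by
          refine wt_congr A fun t ht => ?_
          simp only [hp', if_neg (by omega : ¬ a + t < a)]
          congr 1
          omega
        rw [e1, e2]
        ring
  

lemma exists_repeat (p : ℕ → Fin (d+1)) :
    ∃ a b, a < b ∧ b ≤ d + 1 ∧ p a = p b := by
  have hcard : Fintype.card (Fin (d+1)) < Fintype.card (Fin (d+2)) := by simp
  obtain ⟨a, b, hne, heq⟩ := Fintype.exists_ne_map_eq_of_card_lt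
    (fun s : Fin (d+2) => p s) hcard
  rcases Nat.lt_or_ge (a : ℕ) (b : ℕ) with h | h
  · exact ⟨a, b, h, by omega, heq⟩
  · have h' : (b : ℕ) < (a : ℕ) := by
      rcases Nat.lt_or_ge (b : ℕ) (a : ℕ) with h' | h'
      · exact h'
      · exact absurd (Fin.ext (by omega)) hne
    exact ⟨b, a, h', by omega, heq.symm⟩

lemma closed_wt_le : ∀ k, ∀ p : ℕ → Fin (d+1), p k = p 0 → wt A k p ≤ k * lam A := by
  intro k
  induction k using Nat.strong_induction_on with
  | _ k ih =>
    intro p hp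
    rcases Nat.lt_or_ge k 1 with hk | hk
    · interval_cases k
      simp [wt]
    rcases le_or_gt k (d+1) with hkn | hkn
    · exact wt_le_lam A hk hkn hp
    · obtain ⟨a, b, hab, hbn, hpab⟩ := exists_repeat p
      have hbk : b ≤ k := by omega
      have hsplit := wt_split A p hab hbk hpab
      set ℓ := b - a with hℓ
      set p' : ℕ → Fin (d+1) := fun t => if t < a then p t else p (t + ℓ) with hp'
      have hcyc : wt A ℓ (fun t => p (a + t)) ≤ (ℓ : ℝ) * lam A := by
        refine wt_le_lam A (by omega) (by omega) ?_
        show p (a + ℓ) = p a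
        have : a + ℓ = b := by omega
        rw [this, ← hpab]
      have hclosed : p' (k - ℓ) = p' 0 := by
        have h1 : p' (k - ℓ) = p 0 := by
          simp only [hp']
          rw [if_neg (by omega : ¬ k - ℓ < a)]
          have : k - ℓ + ℓ = k := by omega
          rw [this, hp]
        have h2 : p' 0 = p 0 := by
          simp only [hp']
          by_cases h : 0 < a
          · rw [if_pos h]
          · rw [if_neg h]
            have : 0 + ℓ = b := by omega
            rw [this, ← hpab]
            congr 1
            omega
        rw [h1, h2]
      have hrest : wt A (k - ℓ) p' ≤ ((k - ℓ : ℕ) : ℝ) * lam A :=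
        ih (k - ℓ) (by omega) p' hclosed
      have hcast : ((k - ℓ : ℕ) : ℝ) = (k : ℝ) - (ℓ : ℝ) := by
        push_cast [Nat.cast_sub (by omega : ℓ ≤ k)]
        ring
      rw [hsplit]
      rw [hcast] at hrest
      linarith


/-- the normalized matrix `B = A - λ`. -/
noncomputable def Bm : Fin (d+1) → Fin (d+1) → ℝ := fun i j => A i j - lam A

lemma closedB_le (k : ℕ) (p : ℕ → Fin (d+1)) (hp : p k = p 0) : wt (Bm A) k p ≤ 0 := by
  have := closed_wt_le A k p hp
  have hB : wt (Bm A) k p = wt A k p - k * lam A := wt_sub_const A (lam A) k p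
  rw [hB]
  linarith

variable (c : Fin (d+1))

def vSet (i : Fin (d+1)) : Set ℝ :=
  { x | ∃ k, k ≤ d + 1 ∧ ∃ p : ℕ → Fin (d+1), p 0 = i ∧ p k = c ∧ x = wt (Bm A) k p }

lemma vSet_nonempty (i : Fin (d+1)) : (vSet A c i).Nonempty := by
  refine ⟨wt (Bm A) 1 (fun t => if t = 0 then i else c), 1, by omega,
    fun t => if t = 0 then i else c, rfl, rfl, rfl⟩

lemma vSet_finite (i : Fin (d+1)) : (vSet A c i).Finite := by
  have h : vSet A c i ⊆ Set.range (fun kq : Fin (d+2) × (Fin (d+2) → Fin (d+1)) =>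
      wt (Bm A) kq.1 (fun t => kq.2 ⟨min t (d+1), Nat.lt_succ_of_le (min_le_right _ _)⟩)) := by
    rintro x ⟨k, hkn, p, hp0, hpk, rfl⟩
    refine ⟨⟨⟨k, by omega⟩, fun s => p s⟩, ?_⟩
    simp only
    refine (wt_congr _ fun t ht => ?_).symm
    rw [min_eq_left (by omega)]
  exact (Set.finite_range _).subset h

noncomputable def vv (i : Fin (d+1)) : ℝ := sSup (vSet A c i)

lemma walk_le_vv (i : Fin (d+1)) :
    ∀ k, ∀ p : ℕ → Fin (d+1), p 0 = i → p k = c → wt (Bm A) k p ≤ vv A c i := by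
  intro k
  induction k using Nat.strong_induction_on with
  | _ k ih =>
    intro p hp0 hpk
    rcases le_or_gt k (d+1) with hkn | hkn
    · exact le_csSup (vSet_finite A c i).bddAbove ⟨k, hkn, p, hp0, hpk, rfl⟩
    · obtain ⟨a, b, hab, hbn, hpab⟩ := exists_repeat p
      have hbk : b ≤ k := by omega
      have hsplit := wt_split (Bm A) p hab hbk hpab
      set ℓ := b - a with hℓ
      set p' : ℕ → Fin (d+1) := fun t => if t < a then p t else p (t + ℓ) with hp'
      have hcyc : wt (Bm A) ℓ (fun t => p (a + t)) ≤ 0 := by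
        refine closedB_le A ℓ _ ?_
        show p (a + ℓ) = p a
        have : a + ℓ = b := by omega
        rw [this, ← hpab]
      have h0 : p' 0 = i := by
        simp only [hp']
        by_cases h : 0 < a
        · rw [if_pos h]; exact hp0
        · rw [if_neg h]
          have : 0 + ℓ = b := by omega
          rw [this, ← hpab]
          have : a = 0 := by omega
          rw [this] at hpab ⊢
          exact hp0
      have hk' : p' (k - ℓ) = c := by
        simp only [hp']
        rw [if_neg (by omega : ¬ k - ℓ < a)]
        have : k - ℓ + ℓ = k := by omega
        rw [this, hpk]
      have hrest := ih (k - ℓ) (by omega) p' h0 hk'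
      linarith [hsplit, hcyc, hrest]

lemma vv_mem (i : Fin (d+1)) : vv A c i ∈ vSet A c i :=
  (vSet_nonempty A c i).csSup_mem (vSet_finite A c i)


lemma ciSup_const_add {ι : Type*} [Fintype ι] [Nonempty ι] (cst : ℝ) (f : ι → ℝ) :
    (⨆ i, cst + f i) = cst + ⨆ i, f i := by
  obtain ⟨i0, hi0⟩ := Finite.exists_max f
  apply le_antisymm
  · exact ciSup_le fun j => add_le_add_right (le_ciSup (Set.finite_range f).bddAbove j) cst
  · have h1 : (⨆ i, f i) ≤ f i0 := ciSup_le hi0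
    have h2 : cst + f i0 ≤ ⨆ i, cst + f i :=
      le_ciSup (Set.finite_range fun i => cst + f i).bddAbove i0
    linarith

lemma wt_cons (M : Fin (d+1) → Fin (d+1) → ℝ) (k : ℕ) (i : Fin (d+1)) (p : ℕ → Fin (d+1)) :
    wt M (k+1) (fun t => if t = 0 then i else p (t-1)) = M i (p 0) + wt M k p := by
  rw [show k + 1 = 1 + k from by omega, wt_add]
  congr 1
  · unfold wt
    simp
  · refine wt_congr M fun t ht => ?_
    show (if 1 + t = 0 then i else p (1 + t - 1)) = p t
    rw [if_neg (by omega : ¬ 1 + t = 0)]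
    congr 1
    omega

lemma wt_succ_shift (M : Fin (d+1) → Fin (d+1) → ℝ) (k : ℕ) (p : ℕ → Fin (d+1)) :
    wt M (k+1) p = M (p 0) (p 1) + wt M k (fun t => p (t+1)) := by
  rw [show k + 1 = 1 + k from by omega, wt_add]
  congr 1
  · unfold wt
    simp
  · refine wt_congr M fun t ht => ?_
    show p (1 + t) = p (t + 1)
    congr 1
    omega

lemma eigen_eq (m : ℕ) (w : ℕ → Fin (d+1)) (hm : 1 ≤ m) (hw : w m = w 0) (hc : w 0 = c)
    (hzero : wt (Bm A) m w = 0) (i : Fin (d+1)) :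
    (⨆ j, Bm A i j + vv A c j) = vv A c i := by
  apply le_antisymm
  · refine ciSup_le fun j => ?_
    obtain ⟨k, hkn, p, hp0, hpk, hx⟩ := vv_mem A c j
    have hext := wt_cons (Bm A) k i p
    rw [hp0] at hext
    have hwalk : wt (Bm A) (k+1) (fun t => if t = 0 then i else p (t-1)) ≤ vv A c i := by
      refine walk_le_vv A c i (k+1) _ rfl ?_
      simp only [show k + 1 ≠ 0 from by omega, if_neg]
      simpa using hpk
    rw [hext] at hwalk
    linarith [hx, hwalk]
  · obtain ⟨k, hkn, p, hp0, hpk, hx⟩ := vv_mem A c i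
    rcases Nat.eq_zero_or_pos k with hk0 | hkpos
    · -- i = c and vv A c i = 0
      subst hk0
      have hic : i = c := by rw [← hp0, hpk]
      have hvi : vv A c i = 0 := by
        rw [hx]
        simp [wt]
      -- use the critical cycle
      obtain ⟨m', rfl⟩ : ∃ m', m = m' + 1 := ⟨m - 1, by omega⟩
      have hshift := wt_succ_shift (Bm A) m' w
      rw [hzero] at hshift
      have hq : wt (Bm A) m' (fun t => w (t+1)) ≤ vv A c (w 1) := by
        refine walk_le_vv A c (w 1) m' _ rfl ?_
        show w (m' + 1) = c
        rw [hw, hc]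
      have hle : vv A c i ≤ Bm A i (w 1) + vv A c (w 1) := by
        rw [hvi, hic]
        rw [hc] at hshift
        linarith [hshift, hq]
      exact hle.trans (le_ciSup (Set.finite_range fun j => Bm A i j + vv A c j).bddAbove (w 1))
    · obtain ⟨k', rfl⟩ : ∃ k', k = k' + 1 := ⟨k - 1, by omega⟩
      have hshift := wt_succ_shift (Bm A) k' p
      have hq : wt (Bm A) k' (fun t => p (t+1)) ≤ vv A c (p 1) := by
        refine walk_le_vv A c (p 1) k' _ rfl ?_
        simpa using hpk
      have hle : vv A c i ≤ Bm A i (p 1) + vv A c (p 1) := by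
        rw [hx, hshift, hp0]
        linarith [hq]
      exact hle.trans (le_ciSup (Set.finite_range fun j => Bm A i j + vv A c j).bddAbove (p 1))

theorem exists_eigen : ∃ (l : ℝ) (v : Fin (d+1) → ℝ),
    ∀ i, (⨆ j, A i j + v j) = l + v i := by
  obtain ⟨m, hm1, hmn, w, hw, hcrit⟩ := lam_attained A
  set c := w 0 with hc
  have hzero : wt (Bm A) m w = 0 := by
    have := wt_sub_const A (lam A) m w
    rw [hcrit] at this
    unfold Bm
    simpa using this
  refine ⟨lam A, vv A c, fun i => ?_⟩
  have h1 : ∀ j, A i j + vv A c j = lam A + (Bm A i j + vv A c j) := by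
    intro j
    simp [Bm]
    ring
  calc (⨆ j, A i j + vv A c j) = ⨆ j, (lam A + (Bm A i j + vv A c j)) := by
        exact iSup_congr h1
    _ = lam A + ⨆ j, (Bm A i j + vv A c j) := ciSup_const_add _ _
    _ = lam A + vv A c i := by rw [eigen_eq A c m w hm1 hw rfl hzero i]


lemma eigen_le (l m : ℝ) (v u : Fin (d+1) → ℝ)
    (hv : ∀ i, (⨆ j, A i j + v j) = l + v i)
    (hu : ∀ i, (⨆ j, A i j + u j) = m + u i) : l ≤ m := by
  by_contra hlt
  push_neg at hlt
  obtain ⟨i0, hC⟩ := Finite.exists_max (fun i => v i - u i)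
  set C := v i0 - u i0 with hCdef
  have key : ∀ N : ℕ, ∀ i, N * l + v i ≤ N * m + u i + C := by
    intro N
    induction N with
    | zero => intro i; have := hC i; simp only [Nat.cast_zero, zero_mul, zero_add]; linarith
    | succ N ihN =>
      intro i
      have step : (⨆ j, ((N : ℝ) * l + (A i j + v j)))
          ≤ ⨆ j, ((N : ℝ) * m + C + (A i j + u j)) := by
        refine ciSup_mono (Set.finite_range _).bddAbove fun j => ?_
        have := ihN j
        linarith
      rw [ciSup_const_add, ciSup_const_add, hv i, hu i] at step
      push_cast
      linarith
  have harch := exists_nat_gt ((u 0 + C - v 0) / (l - m))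
  obtain ⟨N, hN⟩ := harch
  have hlm : (0:ℝ) < l - m := by linarith
  rw [div_lt_iff₀ hlm] at hN
  have := key N 0
  nlinarith

end MaxPlusAux

/-- Every square matrix with real (finite) entries has a max-plus eigenvalue:
there exist `λ ∈ ℝ` and `v ∈ ℝ^d` with `max_j (A_{ij} + v_j) = λ + v_i` for all `i`;
moreover this eigenvalue is unique. -/
theorem maxplus_eigenvalue_exists_unique {d : ℕ}
    (A : Fin (d + 1) → Fin (d + 1) → ℝ) :
    (∃ (lam : ℝ) (v : Fin (d + 1) → ℝ),
      ∀ i, (⨆ j, A i j + v j) = lam + v i) ∧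
    (∀ (lam mu : ℝ) (v u : Fin (d + 1) → ℝ),
      (∀ i, (⨆ j, A i j + v j) = lam + v i) →
      (∀ i, (⨆ j, A i j + u j) = mu + u i) → lam = mu) := by
  refine ⟨MaxPlusAux.exists_eigen A, fun lam mu v u hv hu => ?_⟩
  exact le_antisymm (MaxPlusAux.eigen_le A lam mu v u hv hu)
    (MaxPlusAux.eigen_le A mu lam u v hu hv)
end
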